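/- Let L be a semivalid representation of a connected graph G and β a broken cone of P(L). Then β is exactly 2-dimensional, and its boundary consists of the origin together with two 1-dimensional cones, corresponding to vectors x ∈ L whose negative support equals supp_-(β) and whose positive support is one of the two connected components induced by supp_+(β). -/

import Mathlib

open Matrix Set

variable {V : Type*} [Fintype V] [DecidableEq V]

/-- Positive support of a vector. -/
def posSupp (x : V → ℝ) : Set V := {v | 0 < x v}

/-- Negative support of a vector. -/
def negSupp (x : V → ℝ) : Set V := {v | x v < 0}

/-- Support of a vector. -/
def supp (x : V → ℝ) : Set V := {v | x v ≠ 0}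

/-- External neighborhood of a set of vertices. -/
def nbhd (G : SimpleGraph V) (S : Set V) : Set V := {v | v ∉ S ∧ ∃ u ∈ S, G.Adj u v}

/-- Number of connected components of the subgraph induced by `S`. -/
noncomputable def compCount (G : SimpleGraph V) (S : Set V) : ℕ :=
  Nat.card (G.induce S).ConnectedComponent

/-- `C` is (the vertex set of) a connected component of the subgraph induced by `S`. -/
def IsComponentOf (G : SimpleGraph V) (S C : Set V) : Prop :=
  ∃ K : (G.induce S).ConnectedComponent, C = Subtype.val '' K.supp

/-- `M ∈ M(G)`: a real symmetric matrix with exactly one negative eigenvalue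
(counted with multiplicity), negative entries on edges and zero off-diagonal
entries on non-edges. -/
structure CdVMatrix (G : SimpleGraph V) (M : Matrix V V ℝ) : Prop where
  herm : M.IsHermitian
  edge_neg : ∀ u v, G.Adj u v → M u v < 0
  nonedge_zero : ∀ u v, u ≠ v → ¬ G.Adj u v → M u v = 0
  one_neg : {i | herm.eigenvalues i < 0}.ncard = 1

/-- Semivalid representation of a graph: conditions (i)-(iv). -/
def Semivalid (G : SimpleGraph V) (L : Submodule ℝ (V → ℝ)) : Prop :=
  ∀ x ∈ L, x ≠ 0 →
    ((posSupp x).Nonempty ∧ (negSupp x).Nonempty) ∧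
    ((G.induce (posSupp x)).Connected ∨
      (compCount G (posSupp x) = 2 ∧ (G.induce (negSupp x)).Connected)) ∧
    ((∀ y ∈ L, y ≠ 0 → supp y ⊆ supp x → supp y = supp x) →
      (G.induce (posSupp x)).Connected ∧ (G.induce (negSupp x)).Connected) ∧
    (¬ (G.induce (posSupp x)).Connected →
      (∀ u ∈ posSupp x, ∀ v ∈ negSupp x, ¬ G.Adj u v) ∧
      (∀ C : Set V, IsComponentOf G (supp x) C → nbhd G C = nbhd G (supp x)))

/-- The sign-pattern cone of `x` in `L` (a relatively open cone of the fan `P(L)`). -/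
def signCone (L : Submodule ℝ (V → ℝ)) (x : V → ℝ) : Set (V → ℝ) :=
  {y | y ∈ L ∧ posSupp y = posSupp x ∧ negSupp y = negSupp x}

/-- The dimension of the cone of `x`, i.e. the dimension of its linear span. -/
noncomputable def coneDim (L : Submodule ℝ (V → ℝ)) (x : V → ℝ) : ℕ :=
  Module.finrank ℝ (Submodule.span ℝ (signCone L x))

/-- The graph parameter η: maximal dimension of a semivalid representation. -/
noncomputable def etaParam (G : SimpleGraph V) : ℕ :=
  sSup {n | ∃ L : Submodule ℝ (V → ℝ), Semivalid G L ∧ Module.finrank ℝ L = n}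

/-- Valid representation of a graph. -/
def Valid (G : SimpleGraph V) (X : Submodule ℝ (V → ℝ)) : Prop :=
  ∀ x ∈ X, x ≠ 0 → (G.induce (posSupp x)).Connected

/-- The graph parameter λ: maximal dimension of a valid representation. -/
noncomputable def lambdaParam (G : SimpleGraph V) : ℕ :=
  sSup {n | ∃ X : Submodule ℝ (V → ℝ), Valid G X ∧ Module.finrank ℝ X = n}

/-- The Strong Arnold hypothesis. -/
def SAH (G : SimpleGraph V) (M : Matrix V V ℝ) : Prop :=
  ∀ X : Matrix V V ℝ, X.IsSymm → (∀ u v, (u = v ∨ G.Adj u v) → X u v = 0) →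
    M * X = 0 → X = 0

/-- The Colin de Verdière parameter μ. -/
noncomputable def muParam (G : SimpleGraph V) : ℕ :=
  sSup {n | ∃ M : Matrix V V ℝ, CdVMatrix G M ∧ SAH G M ∧
    Module.finrank ℝ (LinearMap.ker M.mulVecLin) = n}


set_option linter.unusedSectionVars false
set_option linter.unusedVariables false
set_option maxHeartbeats 1000000

section aux
variable {G : SimpleGraph V}

private lemma crossAux {X A B : Set V} (htot : ∀ v ∈ X, v ∈ A ∨ v ∈ B)
    (hd : ∀ v, ¬(v ∈ A ∧ v ∈ B)) :
    ∀ {p q : X} (_ : (G.induce X).Walk p q), p.1 ∈ A → q.1 ∈ B →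
      ∃ a ∈ A, ∃ b ∈ B, G.Adj a b := by
  intro p q w
  induction w with
  | nil => intro hp hq; exact absurd ⟨hp, hq⟩ (hd _)
  | @cons u v r h w ih =>
    intro hp hq
    rcases htot v.1 v.2 with hv | hv
    · exact ih hv hq
    · exact ⟨u.1, hp, v.1, hv, h⟩

/-- If an induced subgraph on `X` is connected and `X` is partitioned into two
nonempty parts, there is an edge between the parts. -/
lemma cross_of_connected {X A B : Set V} (hc : (G.induce X).Connected)
    (hun : A ∪ B = X) (hd : ∀ v, ¬(v ∈ A ∧ v ∈ B))
    (hA : A.Nonempty) (hB : B.Nonempty) : ∃ a ∈ A, ∃ b ∈ B, G.Adj a b := by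
  obtain ⟨a, ha⟩ := hA
  obtain ⟨b, hb⟩ := hB
  have haX : a ∈ X := hun ▸ Or.inl ha
  have hbX : b ∈ X := hun ▸ Or.inr hb
  obtain ⟨w⟩ := hc.preconnected ⟨a, haX⟩ ⟨b, hbX⟩
  exact crossAux (fun v hv => by rw [← hun] at hv; exact hv) hd w ha hb

lemma not_connected_of_parts {X A B : Set V}
    (hun : A ∪ B = X) (hd : ∀ v, ¬(v ∈ A ∧ v ∈ B))
    (hA : A.Nonempty) (hB : B.Nonempty)
    (hne : ∀ a ∈ A, ∀ b ∈ B, ¬ G.Adj a b) : ¬ (G.induce X).Connected := by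
  intro hc
  obtain ⟨a, ha, b, hb, hadj⟩ := cross_of_connected hc hun hd hA hB
  exact hne a ha b hb hadj


private lemma reach_in_comp {X : Set V} (K : (G.induce X).ConnectedComponent) :
    ∀ {p q : X} (_ : (G.induce X).Walk p q) (hp : p ∈ K.supp),
      ∃ hq : q ∈ K.supp, (G.induce (Subtype.val '' K.supp)).Reachable
          ⟨p.1, mem_image_of_mem _ hp⟩ ⟨q.1, mem_image_of_mem _ hq⟩ := by
  intro p q w
  induction w with
  | nil => intro hp; exact ⟨hp, SimpleGraph.Reachable.refl _⟩
  | @cons u v r h w ih =>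
    intro hp
    have hv : v ∈ K.supp := by
      rw [SimpleGraph.ConnectedComponent.mem_supp_iff] at hp ⊢
      rw [← hp]; exact SimpleGraph.ConnectedComponent.sound (h.symm.reachable)
    obtain ⟨hq, hr⟩ := ih hv
    refine ⟨hq, SimpleGraph.Reachable.trans ?_ hr⟩
    have hadj : (G.induce (Subtype.val '' K.supp)).Adj
        ⟨u.1, mem_image_of_mem _ hp⟩ ⟨v.1, mem_image_of_mem _ hv⟩ := h
    exact hadj.reachable

/-- The vertex set of a connected component induces a connected subgraph. -/
lemma comp_supp_connected {X : Set V} (K : (G.induce X).ConnectedComponent) :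
    (G.induce (Subtype.val '' K.supp)).Connected := by
  obtain ⟨p, hp⟩ := K.exists_rep
  haveI : Nonempty ↑(Subtype.val '' K.supp) :=
    ⟨⟨p.1, mem_image_of_mem _ (by rw [SimpleGraph.ConnectedComponent.mem_supp_iff]; exact hp)⟩⟩
  refine ⟨fun a b => ?_⟩
  revert a b
  rintro ⟨a, a', haK, rfl⟩ ⟨b, b', hbK, rfl⟩
  have hab : (G.induce X).Reachable a' b' :=
    SimpleGraph.ConnectedComponent.exact (by
      rw [SimpleGraph.ConnectedComponent.mem_supp_iff] at haK hbK; rw [haK, hbK])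
  obtain ⟨w⟩ := hab
  obtain ⟨hq, hr⟩ := reach_in_comp K w haK
  exact hr

private lemma walk_stay {U M : Set V}
    (hclosed : ∀ a ∈ M, ∀ b ∈ U, G.Adj a b → b ∈ M) :
    ∀ {p q : U} (_ : (G.induce U).Walk p q), p.1 ∈ M → q.1 ∈ M := by
  intro p q w
  induction w with
  | nil => exact id
  | @cons u v r h w ih => intro hp; exact ih (hclosed u.1 hp v.1 v.2 h)

private lemma reach_mono {X U : Set V} (hXU : X ⊆ U) {p q : X}
    (h : (G.induce X).Reachable p q) :
    (G.induce U).Reachable ⟨p.1, hXU p.2⟩ ⟨q.1, hXU q.2⟩ := by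
  let f : G.induce X →g G.induce U := ⟨fun a => ⟨a.1, hXU a.2⟩, fun ha => ha⟩
  exact h.map f

/-- A nonempty connected subset closed under adjacency within `U` is a component of `G[U]`. -/
lemma isComponent_of_closed {U M : Set V} (hMU : M ⊆ U) (hMc : (G.induce M).Connected)
    (hclosed : ∀ a ∈ M, ∀ b ∈ U, G.Adj a b → b ∈ M) :
    ∃ K : (G.induce U).ConnectedComponent, M = Subtype.val '' K.supp := by
  obtain ⟨⟨m₀, hm₀⟩⟩ := hMc.nonempty
  refine ⟨(G.induce U).connectedComponentMk ⟨m₀, hMU hm₀⟩, ?_⟩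
  ext v
  constructor
  · intro hv
    have hr : (G.induce M).Reachable ⟨v, hv⟩ ⟨m₀, hm₀⟩ := hMc.preconnected _ _
    have := reach_mono hMU hr
    exact ⟨⟨v, hMU hv⟩, by
      rw [SimpleGraph.ConnectedComponent.mem_supp_iff]
      exact SimpleGraph.ConnectedComponent.sound this, rfl⟩
  · rintro ⟨⟨v', hv'U⟩, hvK, rfl⟩
    rw [SimpleGraph.ConnectedComponent.mem_supp_iff] at hvK
    obtain ⟨w⟩ := SimpleGraph.ConnectedComponent.exact hvK
    exact walk_stay hclosed w.reverse hm₀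

lemma supp_eq_union (x : V → ℝ) : supp x = posSupp x ∪ negSupp x := by
  ext v
  constructor
  · intro h
    rcases lt_or_gt_of_ne (show x v ≠ 0 from h) with h' | h'
    · exact Or.inr h'
    · exact Or.inl h'
  · rintro (h | h)
    · exact ne_of_gt h
    · exact ne_of_lt h

lemma mem_posSupp {x : V → ℝ} {v : V} : v ∈ posSupp x ↔ 0 < x v := Iff.rfl
lemma mem_negSupp {x : V → ℝ} {v : V} : v ∈ negSupp x ↔ x v < 0 := Iff.rfl
lemma mem_supp {x : V → ℝ} {v : V} : v ∈ supp x ↔ x v ≠ 0 := Iff.rfl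

lemma pos_disj_neg (x : V → ℝ) : ∀ v, ¬(v ∈ posSupp x ∧ v ∈ negSupp x) := by
  rintro v ⟨h1, h2⟩
  have h1' : 0 < x v := h1
  have h2' : x v < 0 := h2
  linarith

/-- The "closed sign cone" determined by the sign pattern of `y`. -/
def goodCone (L : Submodule ℝ (V → ℝ)) (y : V → ℝ) : Set (V → ℝ) :=
  {z | z ∈ L ∧ ∀ v, (0 < y v → 0 ≤ z v) ∧ (y v < 0 → z v ≤ 0) ∧ (y v = 0 → z v = 0)}

lemma goodCone_posSupp_subset {L : Submodule ℝ (V → ℝ)} {y z : V → ℝ}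
    (hz : z ∈ goodCone L y) : posSupp z ⊆ posSupp y := by
  intro v hv
  rcases lt_trichotomy (y v) 0 with h | h | h
  · exact absurd (hv.trans_le ((hz.2 v).2.1 h)) (lt_irrefl 0)
  · have h0 := (hz.2 v).2.2 h
    have hv' : (0:ℝ) < z v := hv
    rw [h0] at hv'
    exact absurd hv' (lt_irrefl 0)
  · exact h

lemma goodCone_negSupp_subset {L : Submodule ℝ (V → ℝ)} {y z : V → ℝ}
    (hz : z ∈ goodCone L y) : negSupp z ⊆ negSupp y := by
  intro v hv
  rcases lt_trichotomy (y v) 0 with h | h | h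
  · exact h
  · have h0 := (hz.2 v).2.2 h
    have hv' : z v < 0 := hv
    rw [h0] at hv'
    exact absurd hv' (lt_irrefl 0)
  · exact absurd (((hz.2 v).1 h).trans_lt hv) (lt_irrefl 0)

lemma goodCone_supp_subset {L : Submodule ℝ (V → ℝ)} {y z : V → ℝ}
    (hz : z ∈ goodCone L y) : supp z ⊆ supp y := by
  rw [supp_eq_union, supp_eq_union]
  exact union_subset_union (goodCone_posSupp_subset hz) (goodCone_negSupp_subset hz)

lemma self_mem_goodCone {L : Submodule ℝ (V → ℝ)} {y : V → ℝ} (hy : y ∈ L) :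
    y ∈ goodCone L y :=
  ⟨hy, fun v => ⟨fun h => h.le, fun h => h.le, fun h => h⟩⟩

/-- Peeling lemma: subtracting the critical multiple stays in the closed cone
and creates a new zero on the support of `w`. -/
lemma peel {L : Submodule ℝ (V → ℝ)} {y u w : V → ℝ}
    (hu : u ∈ goodCone L y) (hwL : w ∈ L)
    (hsupp : ∀ v, w v ≠ 0 → u v ≠ 0)
    (hpos : ∃ v, 0 < u v * w v) :
    ∃ t : ℝ, 0 < t ∧ (u - t • w) ∈ goodCone L y ∧ ∃ v, w v ≠ 0 ∧ u v - t * w v = 0 := by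
  classical
  obtain ⟨v₀, hv₀⟩ := hpos
  have hTne : (Finset.univ.filter (fun v => 0 < u v * w v)).Nonempty :=
    ⟨v₀, by simp [hv₀]⟩
  obtain ⟨vm, hvmmem, hvmmin⟩ := Finset.exists_min_image _ (fun v => u v / w v) hTne
  rw [Finset.mem_filter] at hvmmem
  have hvm : 0 < u vm * w vm := hvmmem.2
  have hwvm : w vm ≠ 0 := by rintro h; rw [h, mul_zero] at hvm; exact lt_irrefl 0 hvm
  set t := u vm / w vm with ht
  have htpos : 0 < t := div_pos_iff.mpr (by
    rcases mul_pos_iff.mp hvm with ⟨h1, h2⟩ | ⟨h1, h2⟩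
    · exact Or.inl ⟨h1, h2⟩
    · exact Or.inr ⟨h1, h2⟩)
  have hmin : ∀ v, 0 < u v * w v → t ≤ u v / w v := fun v hv =>
    hvmmin v (Finset.mem_filter.mpr ⟨Finset.mem_univ v, hv⟩)
  refine ⟨t, htpos, ⟨Submodule.sub_mem L hu.1 (Submodule.smul_mem L t hwL), ?_⟩,
    vm, hwvm, by rw [ht, div_mul_cancel₀ _ hwvm, sub_self]⟩
  intro v
  have key : ∀ s : ℝ, (0 < u v ∧ 0 ≤ w v → 0 ≤ u v - t * w v) := by
    intro _ ⟨hup, hwn⟩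
    rcases hwn.lt_or_eq with hw | hw
    · have := hmin v (mul_pos hup hw)
      rw [le_div_iff₀ hw] at this
      linarith
    · rw [← hw]; simp [hup.le]
  refine ⟨?_, ?_, ?_⟩
  · intro hyv
    have huv : 0 ≤ u v := (hu.2 v).1 hyv
    by_cases hw0 : w v = 0
    · simp [hw0, huv]
    · have huv' : u v ≠ 0 := hsupp v hw0
      have huvp : 0 < u v := lt_of_le_of_ne huv (Ne.symm huv')
      rcases lt_trichotomy (w v) 0 with hw | hw | hw
      · have : 0 < t * (-(w v)) := mul_pos htpos (by linarith)
        simp only [Pi.sub_apply, Pi.smul_apply, smul_eq_mul]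
        nlinarith
      · exact absurd hw hw0
      · simpa using key 0 ⟨huvp, hw.le⟩
  · intro hyv
    have huv : u v ≤ 0 := (hu.2 v).2.1 hyv
    by_cases hw0 : w v = 0
    · simp [hw0, huv]
    · have huv' : u v ≠ 0 := hsupp v hw0
      have huvn : u v < 0 := lt_of_le_of_ne huv huv'
      rcases lt_trichotomy (w v) 0 with hw | hw | hw
      · have hr := hmin v (by nlinarith)
        rw [le_div_iff_of_neg hw] at hr
        simp only [Pi.sub_apply, Pi.smul_apply, smul_eq_mul]
        linarith
      · exact absurd hw hw0
      · simp only [Pi.sub_apply, Pi.smul_apply, smul_eq_mul]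
        nlinarith
  · intro hyv
    have huv : u v = 0 := (hu.2 v).2.2 hyv
    have hwv : w v = 0 := by
      by_contra hne; exact hsupp v hne huv
    simp [huv, hwv]

structure Setup (G : SimpleGraph V) (L : Submodule ℝ (V → ℝ)) (y : V → ℝ)
    (C1 C2 : Set V) : Prop where
  hL : Semivalid G L
  hyL : y ∈ L
  hy0 : y ≠ 0
  hbroken : ¬ (G.induce (posSupp y)).Connected
  hC1c : (G.induce C1).Connected
  hC2c : (G.induce C2).Connected
  hNc : (G.induce (negSupp y)).Connected
  hC1n : C1.Nonempty
  hC2n : C2.Nonempty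
  hdisj : ∀ v, ¬(v ∈ C1 ∧ v ∈ C2)
  hun : C1 ∪ C2 = posSupp y
  hne12 : ∀ a ∈ C1, ∀ b ∈ C2, ¬ G.Adj a b
  hnePN : ∀ u ∈ posSupp y, ∀ v ∈ negSupp y, ¬ G.Adj u v

lemma claim2 {L : Submodule ℝ (V → ℝ)} {y : V → ℝ} {C1 C2 : Set V}
    (st : Setup G L y C1 C2) {z : V → ℝ} (hz : z ∈ goodCone L y)
    (hz0 : z ≠ 0) (hzS : supp z ≠ supp y) :
    negSupp z = negSupp y ∧ (posSupp z = C1 ∨ posSupp z = C2) := by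
  classical
  have hzL : z ∈ (L : Set (V → ℝ)) := hz.1
  have hPsub : posSupp z ⊆ posSupp y := goodCone_posSupp_subset hz
  have hMsub : negSupp z ⊆ negSupp y := goodCone_negSupp_subset hz
  obtain ⟨⟨hPn, hMn⟩, hz2, hz3, hz4⟩ := st.hL z hzL hz0
  -- choose a large t
  obtain ⟨vP, hvP⟩ := hPn
  obtain ⟨vM, hvMmem, hmax⟩ :=
    Finset.exists_max_image Finset.univ (fun v => y v / z v) ⟨vP, Finset.mem_univ vP⟩
  set t : ℝ := max 0 (y vM / z vM) + 1 with htdef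
  have htpos : 0 < t := lt_of_le_of_lt (le_max_left 0 _) (lt_add_one _)
  have ht : ∀ v, y v / z v < t :=
    fun v => lt_of_le_of_lt (le_trans (hmax v (Finset.mem_univ v)) (le_max_right 0 _))
      (lt_add_one _)
  set x : V → ℝ := y - t • z with hxdef
  have hxL : x ∈ (L : Set (V → ℝ)) := Submodule.sub_mem L st.hyL (Submodule.smul_mem L t hzL)
  have hxv_pos : ∀ v, 0 < z v → x v < 0 := by
    intro v hv
    have h := ht v
    rw [div_lt_iff₀ hv] at h
    simp only [hxdef, Pi.sub_apply, Pi.smul_apply, smul_eq_mul]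
    linarith
  have hxv_neg : ∀ v, z v < 0 → 0 < x v := by
    intro v hv
    have h := ht v
    rw [div_lt_iff_of_neg hv] at h
    simp only [hxdef, Pi.sub_apply, Pi.smul_apply, smul_eq_mul]
    linarith
  have hxv_zero : ∀ v, z v = 0 → x v = y v := by
    intro v hv
    simp [hxdef, hv]
  have hz_zero : ∀ v, v ∈ posSupp y → v ∉ posSupp z → z v = 0 := by
    intro v hv hnv
    have h1 : 0 ≤ z v := (hz.2 v).1 hv
    rcases h1.lt_or_eq with h | h
    · exact absurd h hnv
    · exact h.symm
  have hz_zero' : ∀ v, v ∈ negSupp y → v ∉ negSupp z → z v = 0 := by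
    intro v hv hnv
    have h1 : z v ≤ 0 := (hz.2 v).2.1 hv
    rcases h1.lt_or_eq with h | h
    · exact absurd h hnv
    · exact h
  have posx : posSupp x = (posSupp y \ posSupp z) ∪ negSupp z := by
    ext v
    constructor
    · intro hv
      have hv' : 0 < x v := hv
      rcases lt_trichotomy (z v) 0 with h | h | h
      · exact Or.inr h
      · have hxy := hxv_zero v h
        have : 0 < y v := by rw [← hxy]; exact hv'
        exact Or.inl ⟨this, by intro hc; have hc' : 0 < z v := hc; rw [h] at hc'; exact absurd hc' (lt_irrefl 0)⟩
      · exact absurd (hv'.trans (hxv_pos v h)) (lt_irrefl 0)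
    · rintro (⟨hvy, hvz⟩ | h)
      · have h0 := hz_zero v hvy hvz
        show 0 < x v
        rw [hxv_zero v h0]; exact hvy
      · exact hxv_neg v h
  have negx : negSupp x = (negSupp y \ negSupp z) ∪ posSupp z := by
    ext v
    constructor
    · intro hv
      have hv' : x v < 0 := hv
      rcases lt_trichotomy (z v) 0 with h | h | h
      · exact absurd ((hxv_neg v h).trans hv') (lt_irrefl 0)
      · have hxy := hxv_zero v h
        have : y v < 0 := by rw [← hxy]; exact hv'
        exact Or.inl ⟨this, by intro hc; have hc' : z v < 0 := hc; rw [h] at hc'; exact absurd hc' (lt_irrefl 0)⟩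
      · exact Or.inr h
    · rintro (⟨hvy, hvz⟩ | h)
      · have h0 := hz_zero' v hvy hvz
        show x v < 0
        rw [hxv_zero v h0]; exact hvy
      · exact hxv_pos v h
  obtain ⟨m, hm⟩ := hMn
  have hx0 : x ≠ 0 := by
    intro h0
    have : 0 < x m := hxv_neg m hm
    rw [h0] at this
    exact absurd this (lt_irrefl 0)
  have hyposneg : ∀ v, v ∈ posSupp y → v ∈ negSupp y → False := by
    intro v h1 h2
    have h1' : 0 < y v := h1
    have h2' : y v < 0 := h2
    linarith
  by_cases hxc : (G.induce (posSupp x)).Connected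
  · -- connected case: derive False
    exfalso
    have hsub : ∀ (Ca Cb : Set V), Ca ∪ Cb = posSupp y →
        (∀ a ∈ Ca, ∀ b ∈ Cb, ¬ G.Adj a b) → Ca ⊆ posSupp z := by
      intro Ca Cb hunab hneab
      by_contra hns
      obtain ⟨b0, hb0Ca, hb0P⟩ := not_subset.mp hns
      have hCaP : Ca ⊆ posSupp y := by rw [← hunab]; exact subset_union_left
      have hAsub : Ca \ posSupp z ⊆ posSupp x := by
        intro v hv
        rw [posx]
        exact Or.inl ⟨hCaP hv.1, hv.2⟩
      have hBm : m ∈ posSupp x \ (Ca \ posSupp z) := by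
        refine ⟨by rw [posx]; exact Or.inr hm, ?_⟩
        rintro ⟨hvCa, -⟩
        exact hyposneg m (hCaP hvCa) (hMsub hm)
      obtain ⟨a, ha, c, hc, hadj⟩ := cross_of_connected hxc
        (union_diff_cancel hAsub) (fun v hv => hv.2.2 hv.1)
        ⟨b0, hb0Ca, hb0P⟩ ⟨m, hBm⟩
      have hcx : c ∈ posSupp x := hc.1
      rw [posx] at hcx
      rcases hcx with ⟨hcy, hcP⟩ | hcM
      · rw [← hunab] at hcy
        rcases hcy with hcCa | hcCb
        · exact hc.2 ⟨hcCa, hcP⟩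
        · exact hneab a ha.1 c hcCb hadj
      · exact st.hnePN a (hCaP ha.1) c (hMsub hcM) hadj
    have hsub1 : C1 ⊆ posSupp z := hsub C1 C2 st.hun st.hne12
    have hsub2 : C2 ⊆ posSupp z :=
      hsub C2 C1 (by rw [union_comm]; exact st.hun)
        (fun a ha b hb hadj => st.hne12 b hb a ha hadj.symm)
    have hP : posSupp z = posSupp y :=
      subset_antisymm hPsub (by rw [← st.hun]; exact union_subset hsub1 hsub2)
    have hbz : ¬(G.induce (posSupp z)).Connected := by rw [hP]; exact st.hbroken
    have hMc : (G.induce (negSupp z)).Connected := (hz2.resolve_left hbz).2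
    have hsuppz : supp z = posSupp y ∪ negSupp z := by
      rw [supp_eq_union, hP]
    have hMcomp : ∃ K : (G.induce (supp z)).ConnectedComponent,
        negSupp z = Subtype.val '' K.supp := by
      apply isComponent_of_closed (by rw [hsuppz]; exact subset_union_right) hMc
      intro a ha b hb hadj
      rw [hsuppz] at hb
      rcases hb with hb | hb
      · exact absurd hadj.symm (st.hnePN b hb a (hMsub ha))
      · exact hb
    have hC1comp : ∃ K : (G.induce (supp z)).ConnectedComponent,
        C1 = Subtype.val '' K.supp := by
      apply isComponent_of_closed
        (by rw [hsuppz]; intro v hv; exact Or.inl (by rw [← st.hun]; exact Or.inl hv))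
        st.hC1c
      intro a ha b hb hadj
      rw [hsuppz] at hb
      rcases hb with hb | hb
      · rw [← st.hun] at hb
        rcases hb with hb | hb
        · exact hb
        · exact absurd hadj (st.hne12 a ha b hb)
      · exact absurd hadj (st.hnePN a (by rw [← st.hun]; exact Or.inl ha) b (hMsub hb))
    have h4 := hz4 hbz
    have e1 := h4.2 (negSupp z) hMcomp
    have e2 := h4.2 C1 hC1comp
    have hMNne : negSupp z ≠ negSupp y := by
      intro h
      apply hzS
      rw [supp_eq_union, supp_eq_union, hP, h]
    have hBne : (negSupp y \ negSupp z).Nonempty := by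
      rcases ssubset_iff_of_subset hMsub |>.mp (hMsub.ssubset_of_ne hMNne) with ⟨v, hv1, hv2⟩
      exact ⟨v, hv1, hv2⟩
    obtain ⟨a, ha, b, hb, hadj⟩ := cross_of_connected st.hNc
      (union_diff_cancel hMsub) (fun v hv => hv.2.2 hv.1) ⟨m, hm⟩ hBne
    have hbnb : b ∈ nbhd G (negSupp z) := ⟨hb.2, a, ha, hadj⟩
    rw [e1, ← e2] at hbnb
    obtain ⟨hbnC1, c, hc, hadj2⟩ := hbnb
    exact st.hnePN c (by rw [← st.hun]; exact Or.inl hc) b hb.1 hadj2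
  · -- disconnected case: read off the structure
    obtain ⟨hne_x, -⟩ := (st.hL x hxL hx0).2.2.2 hxc
    have hMN : negSupp z = negSupp y := by
      by_contra hMneq
      have hBne : (negSupp y \ negSupp z).Nonempty := by
        rcases ssubset_iff_of_subset hMsub |>.mp (hMsub.ssubset_of_ne hMneq) with ⟨v, hv1, hv2⟩
        exact ⟨v, hv1, hv2⟩
      obtain ⟨a, ha, b, hb, hadj⟩ := cross_of_connected st.hNc
        (union_diff_cancel hMsub) (fun v hv => hv.2.2 hv.1) ⟨m, hm⟩ hBne
      exact hne_x a (by rw [posx]; exact Or.inr ha) b (by rw [negx]; exact Or.inl hb) hadj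
    refine ⟨hMN, ?_⟩
    have hcase : ∀ (Ca Cb : Set V), Ca ∪ Cb = posSupp y →
        (G.induce Ca).Connected → Ca ⊆ posSupp z ∨ Ca ∩ posSupp z = ∅ := by
      intro Ca Cb hunab hCac
      have hCaP : Ca ⊆ posSupp y := by rw [← hunab]; exact subset_union_left
      by_cases hin : (Ca ∩ posSupp z).Nonempty
      · left
        by_contra hns
        obtain ⟨b0, hb0Ca, hb0P⟩ := not_subset.mp hns
        obtain ⟨a, ha, c, hc, hadj⟩ := cross_of_connected hCac
          (show (Ca ∩ posSupp z) ∪ (Ca \ posSupp z) = Ca from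
            (inter_union_diff Ca (posSupp z)))
          (fun v hv => hv.2.2 hv.1.2) hin ⟨b0, hb0Ca, hb0P⟩
        refine hne_x c (by rw [posx]; exact Or.inl ⟨hCaP hc.1, hc.2⟩) a
          (by rw [negx]; exact Or.inr ha.2) hadj.symm
      · right
        exact not_nonempty_iff_eq_empty.mp hin
    have hc1 := hcase C1 C2 st.hun st.hC1c
    have hc2 := hcase C2 C1 (by rw [union_comm]; exact st.hun) st.hC2c
    have hPsub' : posSupp z ⊆ C1 ∪ C2 := by rw [st.hun]; exact hPsub
    rcases hc1 with h1 | h1 <;> rcases hc2 with h2 | h2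
    · exfalso
      apply hzS
      rw [supp_eq_union, supp_eq_union, hMN]
      congr 1
      exact subset_antisymm hPsub (by rw [← st.hun]; exact union_subset h1 h2)
    · left
      refine subset_antisymm ?_ h1
      intro v hv
      rcases hPsub' hv with h | h
      · exact h
      · exfalso
        have hmem : v ∈ C2 ∩ posSupp z := ⟨h, hv⟩
        rw [h2] at hmem
        exact hmem
    · right
      refine subset_antisymm ?_ h2
      intro v hv
      rcases hPsub' hv with h | h
      · exfalso
        have hmem : v ∈ C1 ∩ posSupp z := ⟨h, hv⟩
        rw [h1] at hmem
        exact hmem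
      · exact h
    · exfalso
      rcases hPsub' hvP with h | h
      · have : vP ∈ C1 ∩ posSupp z := ⟨h, hvP⟩
        rw [h1] at this
        exact absurd this (notMem_empty vP)
      · have : vP ∈ C2 ∩ posSupp z := ⟨h, hvP⟩
        rw [h2] at this
        exact absurd this (notMem_empty vP)

lemma hyposneg' {y : V → ℝ} {v : V} (h1 : v ∈ posSupp y) (h2 : v ∈ negSupp y) : False := by
  have h1' : 0 < y v := h1
  have h2' : y v < 0 := h2
  linarith

lemma posSupp_smul {c : ℝ} (hc : 0 < c) (g : V → ℝ) : posSupp (c • g) = posSupp g := by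
  ext v
  show 0 < c * g v ↔ 0 < g v
  constructor
  · intro h; nlinarith
  · intro h; exact mul_pos hc h

lemma negSupp_smul {c : ℝ} (hc : 0 < c) (g : V → ℝ) : negSupp (c • g) = negSupp g := by
  ext v
  show c * g v < 0 ↔ g v < 0
  constructor
  · intro h; nlinarith
  · intro h; exact mul_neg_of_pos_of_neg hc h

lemma goodCone_smul {L : Submodule ℝ (V → ℝ)} {y g : V → ℝ} {c : ℝ} (hc : 0 ≤ c)
    (hg : g ∈ goodCone L y) : c • g ∈ goodCone L y := by
  refine ⟨Submodule.smul_mem L c hg.1, fun v => ⟨?_, ?_, ?_⟩⟩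
  · intro h; exact mul_nonneg hc ((hg.2 v).1 h)
  · intro h; exact mul_nonpos_of_nonneg_of_nonpos hc ((hg.2 v).2.1 h)
  · intro h; show c * g v = 0; rw [(hg.2 v).2.2 h, mul_zero]

section withSetup
variable {L : Submodule ℝ (V → ℝ)} {y : V → ℝ} {C1 C2 : Set V}

lemma eq_of_comp_sub (st : Setup G L y C1 C2) {X Ca : Set V}
    (hX : X = C1 ∨ X = C2) (hCa : Ca = C1 ∨ Ca = C2)
    (hsub : X ⊆ Ca ∪ negSupp y) : X = Ca := by
  have hme : ∀ (A B : Set V), A = C1 ∨ A = C2 → B = C1 ∨ B = C2 → A ≠ B →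
      A ⊆ B ∪ negSupp y → False := by
    rintro A B hA hB hAB hsub'
    have hAn : A.Nonempty := by
      rcases hA with rfl | rfl
      · exact st.hC1n
      · exact st.hC2n
    obtain ⟨v, hv⟩ := hAn
    have hvP : v ∈ posSupp y := by
      rw [← st.hun]
      rcases hA with rfl | rfl
      · exact Or.inl hv
      · exact Or.inr hv
    rcases hsub' hv with h | h
    · have : v ∈ C1 ∧ v ∈ C2 := by
        rcases hA with rfl | rfl <;> rcases hB with rfl | rfl
        · exact absurd rfl hAB
        · exact ⟨hv, h⟩
        · exact ⟨h, hv⟩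
        · exact absurd rfl hAB
      exact st.hdisj v this
    · exact hyposneg' hvP h
  by_contra hne
  exact hme X Ca hX hCa hne hsub

lemma ray_unique (st : Setup G L y C1 C2) {Z u : V → ℝ}
    (hZg : Z ∈ goodCone L y) (hug : u ∈ goodCone L y)
    (hposZ : posSupp Z = C1 ∨ posSupp Z = C2)
    (hnegZ : negSupp Z = negSupp y)
    (hposu : posSupp u = posSupp Z) (hnegu : negSupp u = negSupp y) :
    ∃ c : ℝ, u = c • Z := by
  have hsuppZ : supp Z = posSupp Z ∪ negSupp y := by rw [supp_eq_union, hnegZ]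
  have hsuppu : supp u = posSupp Z ∪ negSupp y := by rw [supp_eq_union, hposu, hnegu]
  have hZne : (posSupp Z).Nonempty := by
    rcases hposZ with h | h <;> rw [h]
    · exact st.hC1n
    · exact st.hC2n
  obtain ⟨v₁, hv₁⟩ := hZne
  have hpos : ∃ v, 0 < u v * Z v := by
    refine ⟨v₁, mul_pos ?_ hv₁⟩
    rw [← hposu] at hv₁
    exact hv₁
  obtain ⟨t, ht0, hd, v₂, hZv₂, hval₂⟩ := peel hug hZg.1
    (fun v hv => by
      have : v ∈ supp u := by rw [hsuppu, ← hsuppZ]; exact hv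
      exact this) hpos
  set d : V → ℝ := u - t • Z with hddef
  by_cases hd0 : d = 0
  · refine ⟨t, ?_⟩
    have : u - t • Z = 0 := hd0
    rw [sub_eq_zero] at this
    exact this
  · exfalso
    have hv₂suppZ : v₂ ∈ supp Z := hZv₂
    have hv₂y : v₂ ∈ supp y := goodCone_supp_subset hZg hv₂suppZ
    have hdv₂ : d v₂ = 0 := hval₂
    have hsuppd : supp d ≠ supp y := by
      intro h
      have : v₂ ∈ supp d := by rw [h]; exact hv₂y
      exact this hdv₂
    obtain ⟨hnegd, hposd⟩ := claim2 st hd hd0 hsuppd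
    have hsubd : posSupp d ⊆ posSupp Z ∪ negSupp y := by
      intro v hv
      have : v ∈ supp d := by rw [supp_eq_union]; exact Or.inl hv
      have hvz : d v ≠ 0 := this
      have : u v ≠ 0 ∨ Z v ≠ 0 := by
        by_contra hc
        push_neg at hc
        apply hvz
        show u v - t * Z v = 0
        rw [hc.1, hc.2, mul_zero, sub_zero]
      rcases this with h | h
      · have : v ∈ supp u := h
        rw [hsuppu] at this; exact this
      · have : v ∈ supp Z := h
        rw [hsuppZ] at this; exact this
    have heq : posSupp d = posSupp Z := eq_of_comp_sub st hposd hposZ hsubd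
    have : v₂ ∈ supp d := by
      rw [supp_eq_union, heq, hnegd, ← hsuppZ]
      exact hv₂suppZ
    exact this hdv₂

lemma exists_rays (st : Setup G L y C1 C2) :
    ∃ Z1 Z2 : V → ℝ, Z1 ∈ goodCone L y ∧ Z2 ∈ goodCone L y ∧
      posSupp Z1 = C1 ∧ negSupp Z1 = negSupp y ∧
      posSupp Z2 = C2 ∧ negSupp Z2 = negSupp y ∧ y = Z1 + Z2 := by
  -- non-minimality
  have hmin := (st.hL y st.hyL st.hy0).2.2.1
  have hnotmin : ¬ ∀ z ∈ L, z ≠ 0 → supp z ⊆ supp y → supp z = supp y := by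
    intro h
    exact st.hbroken (hmin h).1
  push_neg at hnotmin
  obtain ⟨z₀, hz₀L, hz₀0, hz₀sub, hz₀ne⟩ := hnotmin
  -- get a direction with a positive ratio
  have hstep : ∃ w, w ∈ L ∧ (∀ v, w v ≠ 0 → y v ≠ 0) ∧ supp w = supp z₀ ∧
      ∃ v, 0 < y v * w v := by
    obtain ⟨v₀, hv₀⟩ : ∃ v, z₀ v ≠ 0 := by
      by_contra hc
      push_neg at hc
      exact hz₀0 (funext hc)
    have hyv₀ : y v₀ ≠ 0 := hz₀sub hv₀
    rcases lt_or_gt_of_ne (mul_ne_zero hyv₀ hv₀ : y v₀ * z₀ v₀ ≠ 0) with h | h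
    · refine ⟨-z₀, Submodule.neg_mem L hz₀L, ?_, ?_, v₀, ?_⟩
      · intro v hv
        have : z₀ v ≠ 0 := by simpa using hv
        exact hz₀sub this
      · ext v; show -z₀ v ≠ 0 ↔ z₀ v ≠ 0; simp
      · show 0 < y v₀ * (-z₀ v₀); nlinarith
    · exact ⟨z₀, hz₀L, fun v hv => hz₀sub hv, rfl, v₀, h⟩
  obtain ⟨w, hwL, hwsupp, hwz₀, hwpos⟩ := hstep
  -- first peel
  obtain ⟨t, ht0, hg, v₁, hwv₁, hval₁⟩ := peel (self_mem_goodCone st.hyL) hwL hwsupp hwpos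
  set g : V → ℝ := y - t • w with hgdef
  have hg0 : g ≠ 0 := by
    intro h0
    apply hz₀ne
    rw [← hwz₀]
    have hty : y = t • w := by rwa [sub_eq_zero] at h0
    ext v
    constructor
    · intro hv
      show y v ≠ 0
      rw [hty]
      show t * w v ≠ 0
      exact mul_ne_zero (ne_of_gt ht0) hv
    · intro hv
      have hyv : y v ≠ 0 := hv
      intro hwv
      apply hyv
      rw [hty]
      show t * w v = 0
      rw [hwv, mul_zero]
  have hgsupp : supp g ≠ supp y := by
    intro h
    have hv₁y : v₁ ∈ supp y := hwsupp v₁ hwv₁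
    have : v₁ ∈ supp g := by rw [h]; exact hv₁y
    exact this hval₁
  obtain ⟨hnegg, hposg⟩ := claim2 st hg hg0 hgsupp
  -- second peel
  have hgne : (posSupp g).Nonempty := by
    rcases hposg with h | h <;> rw [h]
    · exact st.hC1n
    · exact st.hC2n
  obtain ⟨v₂, hv₂⟩ := hgne
  have hsuppg_sub : supp g ⊆ supp y := goodCone_supp_subset hg
  obtain ⟨s, hs0, hu, v₃, hgv₃, hval₃⟩ := peel (self_mem_goodCone st.hyL) hg.1
    (fun v hv => hsuppg_sub hv)
    ⟨v₂, mul_pos (goodCone_posSupp_subset hg hv₂) hv₂⟩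
  set u : V → ℝ := y - s • g with hudef
  have hu0 : u ≠ 0 := by
    intro h0
    apply hgsupp
    have hsy : y = s • g := by rwa [sub_eq_zero] at h0
    ext v
    constructor
    · intro hv
      exact hsuppg_sub hv
    · intro hv
      have hyv : y v ≠ 0 := hv
      show g v ≠ 0
      intro hgv
      apply hyv
      rw [hsy]
      show s * g v = 0
      rw [hgv, mul_zero]
  have husupp : supp u ≠ supp y := by
    intro h
    have : v₃ ∈ supp u := by rw [h]; exact hsuppg_sub hgv₃
    exact this hval₃
  obtain ⟨hnegu, hposu⟩ := claim2 st hu hu0 husupp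
  -- u is positive on the other component
  have hother : ∀ (Ca Cb : Set V), posSupp g = Ca → (Ca = C1 ∧ Cb = C2) ∨ (Ca = C2 ∧ Cb = C1) →
      Cb ⊆ posSupp u := by
    rintro Ca Cb hCa hcb v hv
    have hvP : v ∈ posSupp y := by
      rw [← st.hun]
      rcases hcb with ⟨rfl, rfl⟩ | ⟨rfl, rfl⟩
      · exact Or.inr hv
      · exact Or.inl hv
    have hgv : g v = 0 := by
      by_contra hgv
      have : v ∈ supp g := hgv
      rw [supp_eq_union, hCa, hnegg] at this
      rcases this with h | h
      · rcases hcb with ⟨rfl, rfl⟩ | ⟨rfl, rfl⟩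
        · exact st.hdisj v ⟨h, hv⟩
        · exact st.hdisj v ⟨hv, h⟩
      · exact hyposneg' hvP h
    show 0 < u v
    show 0 < y v - s * g v
    rw [hgv, mul_zero, sub_zero]
    exact hvP
  have hyeq : y = s • g + u := by
    rw [hudef]; abel
  rcases hposg with hposg1 | hposg2
  · -- g is the C1-ray
    have hC2u : C2 ⊆ posSupp u := hother C1 C2 hposg1 (Or.inl ⟨rfl, rfl⟩)
    have hposu2 : posSupp u = C2 := by
      rcases hposu with h | h
      · exfalso
        obtain ⟨v, hv⟩ := st.hC2n
        exact st.hdisj v ⟨h ▸ hC2u hv, hv⟩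
      · exact h
    exact ⟨s • g, u, goodCone_smul hs0.le hg, hu,
      by rw [posSupp_smul hs0, hposg1], by rw [negSupp_smul hs0, hnegg],
      hposu2, hnegu, hyeq⟩
  · -- g is the C2-ray
    have hC1u : C1 ⊆ posSupp u := hother C2 C1 hposg2 (Or.inr ⟨rfl, rfl⟩)
    have hposu1 : posSupp u = C1 := by
      rcases hposu with h | h
      · exact h
      · exfalso
        obtain ⟨v, hv⟩ := st.hC1n
        exact st.hdisj v ⟨hv, h ▸ hC1u hv⟩
    refine ⟨u, s • g, hu, goodCone_smul hs0.le hg, hposu1, hnegu,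
      by rw [posSupp_smul hs0, hposg2], by rw [negSupp_smul hs0, hnegg], ?_⟩
    rw [hyeq]; abel

end withSetup

section withSetup2
variable {L : Submodule ℝ (V → ℝ)} {y : V → ℝ} {C1 C2 : Set V}

lemma decompose (st : Setup G L y C1 C2) {Z1 Z2 : V → ℝ}
    (hZ1g : Z1 ∈ goodCone L y) (hZ2g : Z2 ∈ goodCone L y)
    (hp1 : posSupp Z1 = C1) (hn1 : negSupp Z1 = negSupp y)
    (hp2 : posSupp Z2 = C2) (hn2 : negSupp Z2 = negSupp y)
    (hsum : y = Z1 + Z2)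
    {z : V → ℝ} (hzL : z ∈ L) (hsub : supp z ⊆ supp y) :
    ∃ a b : ℝ, z = a • Z1 + b • Z2 := by
  have key : ∀ w, w ∈ L → (∀ v, w v ≠ 0 → y v ≠ 0) → (∃ v, 0 < y v * w v) →
      ∃ a b : ℝ, w = a • Z1 + b • Z2 := by
    intro w hwL hwsupp hwpos
    obtain ⟨t, ht0, hg, v₁, hwv₁, hval₁⟩ := peel (self_mem_goodCone st.hyL) hwL hwsupp hwpos
    set g : V → ℝ := y - t • w with hgdef
    have hweq : ∀ v, w v = (y v - g v) / t := by
      intro v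
      have : g v = y v - t * w v := rfl
      field_simp [ne_of_gt ht0]
      rw [this]; ring
    by_cases hg0 : g = 0
    · refine ⟨1 / t, 1 / t, ?_⟩
      funext v
      have h0 : g v = 0 := by rw [hg0]; rfl
      have hyv : y v = Z1 v + Z2 v := by rw [hsum]; rfl
      show w v = (1 / t) * Z1 v + (1 / t) * Z2 v
      rw [hweq v, h0, hyv]
      field_simp
      ring
    · have hgsupp : supp g ≠ supp y := by
        intro h
        have hv₁y : v₁ ∈ supp y := hwsupp v₁ hwv₁
        have : v₁ ∈ supp g := by rw [h]; exact hv₁y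
        exact this hval₁
      obtain ⟨hnegg, hposg⟩ := claim2 st hg hg0 hgsupp
      rcases hposg with hpg | hpg
      · obtain ⟨c, hc⟩ := ray_unique st hZ1g hg (Or.inl hp1) hn1
          (by rw [hpg, hp1]) hnegg
        refine ⟨(1 - c) / t, 1 / t, ?_⟩
        funext v
        have hyv : y v = Z1 v + Z2 v := by rw [hsum]; rfl
        have hgv : g v = c * Z1 v := by rw [hc]; rfl
        show w v = (1 - c) / t * Z1 v + 1 / t * Z2 v
        rw [hweq v, hgv, hyv]
        field_simp
        ring
      · obtain ⟨c, hc⟩ := ray_unique st hZ2g hg (Or.inr hp2) hn2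
          (by rw [hpg, hp2]) hnegg
        refine ⟨1 / t, (1 - c) / t, ?_⟩
        funext v
        have hyv : y v = Z1 v + Z2 v := by rw [hsum]; rfl
        have hgv : g v = c * Z2 v := by rw [hc]; rfl
        show w v = 1 / t * Z1 v + (1 - c) / t * Z2 v
        rw [hweq v, hgv, hyv]
        field_simp
        ring
  by_cases hz0 : z = 0
  · exact ⟨0, 0, by rw [hz0]; simp⟩
  obtain ⟨v₀, hv₀⟩ : ∃ v, z v ≠ 0 := by
    by_contra hc
    push_neg at hc
    exact hz0 (funext hc)
  have hyv₀ : y v₀ ≠ 0 := hsub hv₀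
  rcases lt_or_gt_of_ne (mul_ne_zero hyv₀ hv₀ : y v₀ * z v₀ ≠ 0) with h | h
  · obtain ⟨a, b, hab⟩ := key (-z) (Submodule.neg_mem L hzL)
      (fun v hv => hsub (by simpa [supp] using hv))
      ⟨v₀, by show 0 < y v₀ * (-z v₀); nlinarith⟩
    refine ⟨-a, -b, ?_⟩
    have : z = -(a • Z1 + b • Z2) := by
      rw [← hab]; simp
    rw [this]
    funext v
    show -(a * Z1 v + b * Z2 v) = -a * Z1 v + -b * Z2 v
    ring
  · exact key z hzL (fun v hv => hsub hv) ⟨v₀, h⟩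

lemma mem_signCone_add (st : Setup G L y C1 C2) {z : V → ℝ} (hz : z ∈ goodCone L y)
    {ε : ℝ} (hε : 0 < ε) : z + ε • y ∈ signCone L y := by
  refine ⟨Submodule.add_mem L hz.1 (Submodule.smul_mem L ε st.hyL), ?_, ?_⟩
  · ext v
    constructor
    · intro hv
      have hv' : 0 < z v + ε * y v := hv
      rcases lt_trichotomy (y v) 0 with h | h | h
      · exact absurd hv' (by
          have h1 : z v ≤ 0 := (hz.2 v).2.1 h
          nlinarith)
      · exact absurd hv' (by
          have h1 : z v = 0 := (hz.2 v).2.2 h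
          rw [h1, h]; simp)
      · exact h
    · intro hv
      have h1 : 0 ≤ z v := (hz.2 v).1 hv
      show 0 < z v + ε * y v
      have : 0 < y v := hv
      nlinarith
  · ext v
    constructor
    · intro hv
      have hv' : z v + ε * y v < 0 := hv
      rcases lt_trichotomy (y v) 0 with h | h | h
      · exact h
      · exact absurd hv' (by
          have h1 : z v = 0 := (hz.2 v).2.2 h
          rw [h1, h]; simp)
      · exact absurd hv' (by
          have h1 : 0 ≤ z v := (hz.2 v).1 h
          nlinarith)
    · intro hv
      have h1 : z v ≤ 0 := (hz.2 v).2.1 hv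
      show z v + ε * y v < 0
      have : y v < 0 := hv
      nlinarith

lemma signCone_subset_goodCone : signCone L y ⊆ goodCone L y := by
  rintro z ⟨hzL, hpos, hneg⟩
  refine ⟨hzL, fun v => ⟨?_, ?_, ?_⟩⟩
  · intro h
    have : v ∈ posSupp z := by rw [hpos]; exact h
    exact le_of_lt this
  · intro h
    have : v ∈ negSupp z := by rw [hneg]; exact h
    exact le_of_lt this
  · intro h
    by_contra hzv
    have : v ∈ supp z := hzv
    rw [supp_eq_union, hpos, hneg] at this
    rcases this with h' | h'
    · exact absurd h (by have : 0 < y v := h'; linarith)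
    · exact absurd h (by have : y v < 0 := h'; linarith)

lemma isClosed_goodCone : IsClosed (goodCone L y) := by
  have : goodCone L y = (L : Set (V → ℝ)) ∩
      ⋂ v, ({z : V → ℝ | 0 < y v → 0 ≤ z v} ∩
        ({z : V → ℝ | y v < 0 → z v ≤ 0} ∩ {z : V → ℝ | y v = 0 → z v = 0})) := by
    ext z
    simp only [goodCone, mem_setOf_eq, mem_inter_iff, mem_iInter, SetLike.mem_coe]
  rw [this]
  refine IsClosed.inter (Submodule.closed_of_finiteDimensional L) ?_
  refine isClosed_iInter (fun v => ?_)
  refine IsClosed.inter ?_ (IsClosed.inter ?_ ?_)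
  · by_cases h : 0 < y v
    · have : {z : V → ℝ | 0 < y v → 0 ≤ z v} = {z : V → ℝ | 0 ≤ z v} := by
        ext z; simp [h]
      rw [this]
      exact isClosed_le continuous_const (continuous_apply v)
    · have : {z : V → ℝ | 0 < y v → 0 ≤ z v} = univ := by
        ext z; simp [h]
      rw [this]; exact isClosed_univ
  · by_cases h : y v < 0
    · have : {z : V → ℝ | y v < 0 → z v ≤ 0} = {z : V → ℝ | z v ≤ 0} := by
        ext z; simp [h]
      rw [this]
      exact isClosed_le (continuous_apply v) continuous_const
    · have : {z : V → ℝ | y v < 0 → z v ≤ 0} = univ := by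
        ext z; simp [h]
      rw [this]; exact isClosed_univ
  · by_cases h : y v = 0
    · have : {z : V → ℝ | y v = 0 → z v = 0} = {z : V → ℝ | z v = 0} := by
        ext z; simp [h]
      rw [this]
      exact isClosed_eq (continuous_apply v) continuous_const
    · have : {z : V → ℝ | y v = 0 → z v = 0} = univ := by
        ext z; simp [h]
      rw [this]; exact isClosed_univ

lemma closure_signCone_eq (st : Setup G L y C1 C2) :
    closure (signCone L y) = goodCone L y := by
  apply subset_antisymm
  · exact closure_minimal signCone_subset_goodCone isClosed_goodCone
  · intro z hz
    have htend : Filter.Tendsto (fun n : ℕ => z + (1 / (n + 1 : ℝ)) • y)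
        Filter.atTop (nhds z) := by
      have h1 : Filter.Tendsto (fun n : ℕ => (1 / (n + 1 : ℝ))) Filter.atTop (nhds 0) :=
        tendsto_one_div_add_atTop_nhds_zero_nat
      have h2 := Filter.Tendsto.smul_const h1 y
      have h3 := Filter.Tendsto.const_add z h2
      simpa using h3
    refine mem_closure_of_tendsto htend ?_
    filter_upwards with n
    exact mem_signCone_add st hz (by positivity)

end withSetup2

section final
variable {L : Submodule ℝ (V → ℝ)} {y : V → ℝ} {C1 C2 : Set V}

lemma mem_goodCone_of_pattern (st : Setup G L y C1 C2) {x : V → ℝ} (hxL : x ∈ L)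
    (hposx : posSupp x = C1 ∨ posSupp x = C2) (hnegx : negSupp x = negSupp y) :
    x ∈ goodCone L y := by
  have hposxP : posSupp x ⊆ posSupp y := by
    rcases hposx with h | h <;> rw [h, ← st.hun]
    · exact subset_union_left
    · exact subset_union_right
  refine ⟨hxL, fun v => ⟨?_, ?_, ?_⟩⟩
  · intro h
    by_contra hc
    push_neg at hc
    have : v ∈ negSupp x := hc
    rw [hnegx] at this
    exact hyposneg' h this
  · intro h
    by_contra hc
    push_neg at hc
    have : v ∈ posSupp x := hc
    exact hyposneg' (hposxP this) h
  · intro h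
    by_contra hc
    have : v ∈ supp x := hc
    rw [supp_eq_union] at this
    rcases this with h' | h'
    · have : 0 < y v := hposxP h'
      rw [h] at this; exact lt_irrefl 0 this
    · rw [hnegx] at h'
      have : y v < 0 := h'
      rw [h] at this; exact lt_irrefl 0 this
end final


end aux

/-- a broken cone `β = signCone L y` is exactly 2-dimensional, `G[supp₊(β)]`
has exactly two connected components, and the boundary of `β` consists of the origin
together with the (1-dimensional) cones of vectors whose negative support equals
`supp₋(β)` and whose positive support is one of the two components of `G[supp₊(β)]`. -/
theorem stmt4 (G : SimpleGraph V) (hG : G.Connected) (L : Submodule ℝ (V → ℝ))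
    (hL : Semivalid G L) (y : V → ℝ) (hy : y ∈ L) (hy0 : y ≠ 0)
    (hbroken : ¬ (G.induce (posSupp y)).Connected) :
    coneDim L y = 2 ∧
    compCount G (posSupp y) = 2 ∧
    closure (signCone L y) \ signCone L y =
      {0} ∪ {x | x ∈ L ∧ negSupp x = negSupp y ∧
        ∃ K : (G.induce (posSupp y)).ConnectedComponent,
          posSupp x = Subtype.val '' K.supp} ∧
    (∀ x ∈ closure (signCone L y) \ signCone L y, x ≠ 0 → coneDim L x = 1) := by
  classical
  obtain ⟨⟨hPne, hNne⟩, hy2, hy3, hy4⟩ := hL y hy hy0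
  obtain ⟨hcc, hNc⟩ := hy2.resolve_left hbroken
  have hnePN := (hy4 hbroken).1
  obtain ⟨K1, K2, hK12, hKuniv⟩ := Nat.card_eq_two_iff.mp hcc
  have hKall : ∀ K : (G.induce (posSupp y)).ConnectedComponent, K = K1 ∨ K = K2 := by
    intro K
    have : K ∈ ({K1, K2} : Set _) := by rw [hKuniv]; trivial
    simpa using this
  set C1 : Set V := Subtype.val '' K1.supp with hC1def
  set C2 : Set V := Subtype.val '' K2.supp with hC2def
  have hC1n : C1.Nonempty := by
    obtain ⟨p, hp⟩ := K1.exists_rep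
    exact ⟨p.1, p, by rw [SimpleGraph.ConnectedComponent.mem_supp_iff]; exact hp, rfl⟩
  have hC2n : C2.Nonempty := by
    obtain ⟨p, hp⟩ := K2.exists_rep
    exact ⟨p.1, p, by rw [SimpleGraph.ConnectedComponent.mem_supp_iff]; exact hp, rfl⟩
  have hdisj : ∀ v, ¬(v ∈ C1 ∧ v ∈ C2) := by
    rintro v ⟨⟨a, ha, hav⟩, ⟨b, hb, hbv⟩⟩
    apply hK12
    rw [SimpleGraph.ConnectedComponent.mem_supp_iff] at ha hb
    have hab : a = b := Subtype.ext (by rw [hav, hbv])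
    rw [← ha, hab, hb]
  have hun : C1 ∪ C2 = posSupp y := by
    ext v
    constructor
    · rintro (⟨a, _, rfl⟩ | ⟨a, _, rfl⟩) <;> exact a.2
    · intro hv
      rcases hKall ((G.induce (posSupp y)).connectedComponentMk ⟨v, hv⟩) with h | h
      · exact Or.inl ⟨⟨v, hv⟩, by rw [SimpleGraph.ConnectedComponent.mem_supp_iff]; exact h, rfl⟩
      · exact Or.inr ⟨⟨v, hv⟩, by rw [SimpleGraph.ConnectedComponent.mem_supp_iff]; exact h, rfl⟩
  have hne12 : ∀ a ∈ C1, ∀ b ∈ C2, ¬ G.Adj a b := by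
    rintro a ⟨a', ha', rfl⟩ b ⟨b', hb', rfl⟩ hadj
    apply hK12
    rw [SimpleGraph.ConnectedComponent.mem_supp_iff] at ha' hb'
    have : (G.induce (posSupp y)).Adj a' b' := hadj
    rw [← ha', ← hb']
    exact SimpleGraph.ConnectedComponent.sound this.reachable
  have st : Setup G L y C1 C2 :=
    ⟨hL, hy, hy0, hbroken, comp_supp_connected K1, comp_supp_connected K2, hNc,
      hC1n, hC2n, hdisj, hun, hne12, hnePN⟩
  obtain ⟨Z1, Z2, hZ1g, hZ2g, hp1, hn1, hp2, hn2, hsum⟩ := exists_rays st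
  obtain ⟨u1, hu1⟩ := hC1n
  obtain ⟨u2, hu2⟩ := hC2n
  -- pointwise value facts
  have hval : ∀ (Z : V → ℝ) (Ca : Set V), posSupp Z = Ca → negSupp Z = negSupp y →
      ∀ v, (v ∈ Ca → 0 < Z v) ∧ (v ∈ negSupp y → Z v < 0) ∧
        (v ∉ Ca → v ∉ negSupp y → Z v = 0) := by
    intro Z Ca hp hn v
    refine ⟨fun hv => by rw [← hp] at hv; exact hv,
      fun hv => by rw [← hn] at hv; exact hv, fun h1 h2 => ?_⟩
    rcases lt_trichotomy (Z v) 0 with h | h | h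
    · exact absurd (by rw [← hn]; exact h : v ∈ negSupp y) h2
    · exact h
    · exact absurd (by rw [← hp]; exact h : v ∈ Ca) h1
  have hv1 := hval Z1 C1 hp1 hn1
  have hv2 := hval Z2 C2 hp2 hn2
  have hZ1u1 : 0 < Z1 u1 := (hv1 u1).1 hu1
  have hZ2u2 : 0 < Z2 u2 := (hv2 u2).1 hu2
  have hu1P : u1 ∈ posSupp y := by rw [← hun]; exact Or.inl hu1
  have hu2P : u2 ∈ posSupp y := by rw [← hun]; exact Or.inr hu2
  have hZ2u1 : Z2 u1 = 0 := (hv2 u1).2.2 (fun hc => hdisj u1 ⟨hu1, hc⟩)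
    (fun hc => hyposneg' hu1P hc)
  have hZ1u2 : Z1 u2 = 0 := (hv1 u2).2.2 (fun hc => hdisj u2 ⟨hc, hu2⟩)
    (fun hc => hyposneg' hu2P hc)
  have hZ10 : Z1 ≠ 0 := by
    intro h
    rw [h] at hZ1u1
    exact lt_irrefl 0 hZ1u1
  have hZ20 : Z2 ≠ 0 := by
    intro h
    rw [h] at hZ2u2
    exact lt_irrefl 0 hZ2u2
  -- patterns of combinations
  have hpat : ∀ a b : ℝ, 0 < a → 0 < b →
      posSupp (a • Z1 + b • Z2) = posSupp y ∧ negSupp (a • Z1 + b • Z2) = negSupp y := by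
    intro a b ha hb
    constructor
    · ext v
      constructor
      · intro hv
        have hv' : 0 < a * Z1 v + b * Z2 v := hv
        by_contra hc
        have h1 : v ∉ C1 := fun h => hc (hun ▸ Or.inl h)
        have h2 : v ∉ C2 := fun h => hc (hun ▸ Or.inr h)
        by_cases hN : v ∈ negSupp y
        · have := (hv1 v).2.1 hN
          have := (hv2 v).2.1 hN
          nlinarith
        · rw [(hv1 v).2.2 h1 hN, (hv2 v).2.2 h2 hN] at hv'
          simp at hv'
      · intro hv
        rw [← hun] at hv
        show 0 < a * Z1 v + b * Z2 v
        rcases hv with h | h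
        · have hvc2 : v ∉ C2 := fun hc => hdisj v ⟨h, hc⟩
          have hvN : v ∉ negSupp y := fun hc => hyposneg' (hun ▸ Or.inl h) hc
          rw [(hv2 v).2.2 hvc2 hvN]
          have := (hv1 v).1 h
          nlinarith
        · have hvc1 : v ∉ C1 := fun hc => hdisj v ⟨hc, h⟩
          have hvN : v ∉ negSupp y := fun hc => hyposneg' (by rw [← hun]; exact Or.inr h) hc
          rw [(hv1 v).2.2 hvc1 hvN]
          have := (hv2 v).1 h
          nlinarith
    · ext v
      constructor
      · intro hv
        have hv' : a * Z1 v + b * Z2 v < 0 := hv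
        by_contra hc
        by_cases hP : v ∈ posSupp y
        · rw [← hun] at hP
          rcases hP with h | h
          · have h1 := (hv1 v).1 h
            have h2 : Z2 v = 0 := (hv2 v).2.2 (fun hcc => hdisj v ⟨h, hcc⟩)
              (fun hcc => hyposneg' (by rw [← hun]; exact Or.inl h) hcc)
            nlinarith
          · have h1 := (hv2 v).1 h
            have h2 : Z1 v = 0 := (hv1 v).2.2 (fun hcc => hdisj v ⟨hcc, h⟩)
              (fun hcc => hyposneg' (by rw [← hun]; exact Or.inr h) hcc)
            nlinarith
        · have h1 : v ∉ C1 := fun hcc => hP (hun ▸ Or.inl hcc)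
          have h2 : v ∉ C2 := fun hcc => hP (hun ▸ Or.inr hcc)
          rw [(hv1 v).2.2 h1 hc, (hv2 v).2.2 h2 hc] at hv'
          simp at hv'
      · intro hv
        have h1 := (hv1 v).2.1 hv
        have h2 := (hv2 v).2.1 hv
        show a * Z1 v + b * Z2 v < 0
        nlinarith
  -- coefficients of goodCone elements are nonnegative
  have hcoef : ∀ z ∈ goodCone L y, ∃ a b : ℝ, 0 ≤ a ∧ 0 ≤ b ∧ z = a • Z1 + b • Z2 := by
    intro z hz
    obtain ⟨a, b, hab⟩ := decompose st hZ1g hZ2g hp1 hn1 hp2 hn2 hsum hz.1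
      (goodCone_supp_subset hz)
    refine ⟨a, b, ?_, ?_, hab⟩
    · have h1 : 0 ≤ z u1 := (hz.2 u1).1 hu1P
      have h2 : z u1 = a * Z1 u1 + b * Z2 u1 := by rw [hab]; rfl
      rw [hZ2u1] at h2
      by_contra hc
      push_neg at hc
      nlinarith
    · have h1 : 0 ≤ z u2 := (hz.2 u2).1 hu2P
      have h2 : z u2 = a * Z1 u2 + b * Z2 u2 := by rw [hab]; rfl
      rw [hZ1u2] at h2
      by_contra hc
      push_neg at hc
      nlinarith
  have hclos : closure (signCone L y) = goodCone L y := closure_signCone_eq st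
  -- membership in the open cone
  have hmemβ : ∀ a b : ℝ, 0 < a → 0 < b → a • Z1 + b • Z2 ∈ signCone L y := by
    intro a b ha hb
    exact ⟨Submodule.add_mem L (Submodule.smul_mem L a hZ1g.1) (Submodule.smul_mem L b hZ2g.1),
      (hpat a b ha hb).1, (hpat a b ha hb).2⟩
  -- span of the open cone
  have hyβ : y ∈ signCone L y := ⟨hy, rfl, rfl⟩
  have hy'β : Z1 + (2:ℝ) • Z2 ∈ signCone L y := by
    have := hmemβ 1 2 one_pos two_pos
    simpa using this
  have hspan : Submodule.span ℝ (signCone L y) = Submodule.span ℝ ({Z1, Z2} : Set (V → ℝ)) := by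
    apply le_antisymm
    · rw [Submodule.span_le]
      intro z hz
      obtain ⟨a, b, _, _, hab⟩ := hcoef z (signCone_subset_goodCone hz)
      exact Submodule.mem_span_pair.mpr ⟨a, b, hab.symm⟩
    · rw [Submodule.span_le]
      have hymem : y ∈ Submodule.span ℝ (signCone L y) := Submodule.subset_span hyβ
      have hy'mem : Z1 + (2:ℝ) • Z2 ∈ Submodule.span ℝ (signCone L y) :=
        Submodule.subset_span hy'β
      have hZ2mem : Z2 ∈ Submodule.span ℝ (signCone L y) := by
        have heq : Z1 + (2:ℝ) • Z2 - y = Z2 := by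
          rw [hsum]
          funext v
          show Z1 v + 2 * Z2 v - (Z1 v + Z2 v) = Z2 v
          ring
        have := Submodule.sub_mem _ hy'mem hymem
        rwa [heq] at this
      have hZ1mem : Z1 ∈ Submodule.span ℝ (signCone L y) := by
        have heq : y - Z2 = Z1 := by
          rw [hsum]
          funext v
          show Z1 v + Z2 v - Z2 v = Z1 v
          ring
        have := Submodule.sub_mem _ hymem hZ2mem
        rwa [heq] at this
      rintro z hz
      rcases hz with rfl | hz
      · exact hZ1mem
      · rw [mem_singleton_iff] at hz
        rw [hz]
        exact hZ2mem
  have hli : LinearIndependent ℝ ![Z1, Z2] := by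
    rw [linearIndependent_fin2]
    refine ⟨hZ20, fun a h => ?_⟩
    have := congrFun h u1
    simp only [Matrix.cons_val_zero, Matrix.cons_val_one, Matrix.head_cons, Pi.smul_apply,
      smul_eq_mul] at this
    rw [hZ2u1, mul_zero] at this
    rw [← this] at hZ1u1
    exact lt_irrefl 0 hZ1u1
  have hrank2 : Module.finrank ℝ (Submodule.span ℝ ({Z1, Z2} : Set (V → ℝ))) = 2 := by
    have hcard := finrank_span_eq_card hli
    have hrange : Set.range ![Z1, Z2] = ({Z1, Z2} : Set (V → ℝ)) := by
      ext w
      constructor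
      · rintro ⟨i, rfl⟩
        fin_cases i
        · exact Or.inl rfl
        · exact Or.inr rfl
      · rintro (rfl | hw)
        · exact ⟨0, rfl⟩
        · rw [mem_singleton_iff] at hw
          exact ⟨1, hw.symm⟩
    rw [hrange] at hcard
    simpa using hcard
  have hg1 : coneDim L y = 2 := by
    rw [coneDim, hspan]
    exact hrank2
  -- the boundary
  have hxnotβ : ∀ (Ca : Set V), Ca = C1 ∨ Ca = C2 → ∀ x : V → ℝ, posSupp x = Ca →
      x ∉ signCone L y := by
    rintro Ca hCa x hpx ⟨_, hp, _⟩
    rw [hpx] at hp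
    rcases hCa with rfl | rfl
    · exact hdisj u2 ⟨by rw [hp]; exact hu2P, hu2⟩
    · exact hdisj u1 ⟨hu1, by rw [hp]; exact hu1P⟩
  have hbdry : closure (signCone L y) \ signCone L y =
      {0} ∪ {x | x ∈ L ∧ negSupp x = negSupp y ∧
        ∃ K : (G.induce (posSupp y)).ConnectedComponent,
          posSupp x = Subtype.val '' K.supp} := by
    rw [hclos]
    ext x
    constructor
    · rintro ⟨hxK, hxβ⟩
      obtain ⟨a, b, ha, hb, hab⟩ := hcoef x hxK
      rcases lt_or_eq_of_le ha with ha' | ha' <;> rcases lt_or_eq_of_le hb with hb' | hb'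
      · exact absurd (by rw [hab]; exact hmemβ a b ha' hb') hxβ
      · have hx1 : x = a • Z1 := by rw [hab, ← hb']; funext v; simp
        refine Or.inr ⟨hxK.1, ?_, ⟨K1, ?_⟩⟩
        · rw [hx1, negSupp_smul ha', hn1]
        · rw [hx1, posSupp_smul ha', hp1]
      · have hx2 : x = b • Z2 := by rw [hab, ← ha']; funext v; simp
        refine Or.inr ⟨hxK.1, ?_, ⟨K2, ?_⟩⟩
        · rw [hx2, negSupp_smul hb', hn2]
        · rw [hx2, posSupp_smul hb', hp2]
      · left
        show x ∈ ({0} : Set (V → ℝ))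
        rw [mem_singleton_iff, hab, ← ha', ← hb']
        funext v; simp
    · rintro (hx0 | ⟨hxL2, hxneg, K, hxpos⟩)
      · rw [mem_singleton_iff] at hx0
        subst hx0
        refine ⟨⟨L.zero_mem, fun v => ⟨fun _ => le_refl 0, fun _ => le_refl 0, fun _ => rfl⟩⟩, ?_⟩
        rintro ⟨_, hp, _⟩
        obtain ⟨v, hv⟩ := hPne
        have : v ∈ posSupp (0 : V → ℝ) := by rw [hp]; exact hv
        have : (0:ℝ) < 0 := this
        exact lt_irrefl 0 this
      · have hxC : posSupp x = C1 ∨ posSupp x = C2 := by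
          rcases hKall K with rfl | rfl
          · exact Or.inl hxpos
          · exact Or.inr hxpos
        refine ⟨mem_goodCone_of_pattern st hxL2 hxC hxneg, ?_⟩
        rcases hxC with h | h
        · exact hxnotβ C1 (Or.inl rfl) x h
        · exact hxnotβ C2 (Or.inr rfl) x h
  refine ⟨hg1, hcc, hbdry, ?_⟩
  intro x hx hx0
  rw [hbdry] at hx
  rcases hx with hx | ⟨hxL2, hxneg, K, hxpos⟩
  · rw [mem_singleton_iff] at hx
    exact absurd hx hx0
  · have hxC : posSupp x = C1 ∨ posSupp x = C2 := by
      rcases hKall K with rfl | rfl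
      · exact Or.inl hxpos
      · exact Or.inr hxpos
    have hray : ∀ (Z : V → ℝ) (Ca : Set V), Z ∈ goodCone L y →
        (posSupp Z = C1 ∨ posSupp Z = C2) → posSupp Z = Ca → negSupp Z = negSupp y →
        Z ≠ 0 → posSupp x = Ca → coneDim L x = 1 := by
      intro Z Ca hZg hZC hZCa hZn hZ0 hxCa
      have hsc : Submodule.span ℝ (signCone L x) = Submodule.span ℝ ({Z} : Set (V → ℝ)) := by
        apply le_antisymm
        · rw [Submodule.span_le]
          rintro z ⟨hzL, hzp, hzn⟩
          have hzp' : posSupp z = Ca := by rw [hzp, hxCa]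
          have hzn' : negSupp z = negSupp y := by rw [hzn, hxneg]
          have hzg : z ∈ goodCone L y :=
            mem_goodCone_of_pattern st hzL (by rw [hzp']; rwa [hZCa] at hZC) hzn'
          obtain ⟨c, hc⟩ := ray_unique st hZg hzg hZC hZn (by rw [hzp', hZCa]) hzn'
          exact Submodule.mem_span_singleton.mpr ⟨c, hc.symm⟩
        · rw [Submodule.span_le, singleton_subset_iff]
          refine Submodule.subset_span ⟨hZg.1, ?_, ?_⟩
          · rw [hZCa, hxCa]
          · rw [hZn, hxneg]
      rw [coneDim, hsc]
      exact finrank_span_singleton hZ0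
    rcases hxC with h | h
    · exact hray Z1 C1 hZ1g (Or.inl hp1) hp1 hn1 hZ10 h
    · exact hray Z2 C2 hZ2g (Or.inr hp2) hp2 hn2 hZ20 h
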